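/- Let K be a compact Hausdorff space and X = C(K, ℝ) the Banach space of continuous real-valued functions on K with the supremum norm. If no point of ext(B_{X*}) is a point of continuity of the identity map I : (B_{X*}, w*) → (B_{X*}, w), then no point of the unit sphere S_{X*} is a point of continuity of I. -/

import Mathlib

set_option linter.unusedSectionVars false
set_option maxHeartbeats 1000000

open NormedSpace Filter Topology

noncomputable section

/-- `f` is a point of continuity of the identity map
`I : (B_{E*}, w*) → (B_{E*}, w)` between the closed unit ball of the dual of `E`
with the relative weak-* topology and the same set with the relative weak topology. -/
def IsPoC {E : Type*} [NormedAddCommGroup E] [NormedSpace ℝ E] (f : StrongDual ℝ E) : Prop :=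
  ContinuousWithinAt
    (fun g : WeakDual ℝ E => toWeakSpace ℝ (StrongDual ℝ E) (WeakDual.toStrongDual g))
    {g : WeakDual ℝ E | ‖WeakDual.toStrongDual g‖ ≤ 1}
    (StrongDual.toWeakDual f)

namespace Stmt12Aux

variable {K : Type*} [TopologicalSpace K] [CompactSpace K] [T2Space K]

/-- The evaluation functional at a point. -/
def δδ (x : K) : StrongDual ℝ C(K, ℝ) := ContinuousMap.evalCLM ℝ x

@[simp] lemma δδ_apply (x : K) (u : C(K, ℝ)) : δδ x u = u x := rfl

lemma norm_δδ_le (x : K) : ‖δδ x‖ ≤ 1 := by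
  refine ContinuousLinearMap.opNorm_le_bound _ zero_le_one fun u => ?_
  rw [one_mul, δδ_apply]
  exact u.norm_coe_le_norm x

lemma exists_testfn (F : Finset K) (v : K → ℝ) (hv : ∀ y, |v y| ≤ 1) :
    ∃ u : C(K, ℝ), ‖u‖ ≤ 1 ∧ ∀ y ∈ F, u y = v y := by
  classical
  have hb : ∀ y : K, ∃ b : C(K, ℝ), b y = 1 ∧ (∀ z ∈ F, z ≠ y → b z = 0) := by
    intro y
    obtain ⟨b, hb0, hb1, -⟩ := exists_continuous_zero_one_of_isClosed
      (s := (↑(F.erase y) : Set K)) (t := {y}) ((F.erase y).finite_toSet.isClosed)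
      isClosed_singleton (by rw [Set.disjoint_singleton_right]; simp)
    refine ⟨b, hb1 rfl, fun z hz hzy => hb0 ?_⟩
    simp only [Finset.coe_erase, Set.mem_diff, Set.mem_singleton_iff]; exact ⟨hz, hzy⟩
  choose b hb1 hb0 using hb
  set u₀ : C(K, ℝ) := ∑ y ∈ F, v y • b y with hu₀
  have hval : ∀ z ∈ F, u₀ z = v z := by
    intro z hz
    rw [hu₀]
    simp only [ContinuousMap.coe_sum, Finset.sum_apply, ContinuousMap.coe_smul, Pi.smul_apply,
      smul_eq_mul]
    rw [Finset.sum_eq_single z (fun y hy hyz => by rw [hb0 y z hz (Ne.symm hyz), mul_zero])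
      (fun hz' => absurd hz hz')]
    rw [hb1 z, mul_one]
  refine ⟨⟨fun z => max (-1) (min 1 (u₀ z)),
    (continuous_const.max (continuous_const.min u₀.continuous))⟩, ?_, ?_⟩
  · rw [ContinuousMap.norm_le _ zero_le_one]
    intro z
    rw [Real.norm_eq_abs, abs_le]
    constructor
    · exact le_max_left _ _
    · exact max_le (by norm_num) (min_le_left _ _)
  · intro y hy
    have h1 : u₀ y = v y := hval y hy
    have h2 : -1 ≤ v y := (abs_le.mp (hv y)).1
    have h3 : v y ≤ 1 := (abs_le.mp (hv y)).2
    show max (-1) (min 1 (u₀ y)) = v y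
    rw [h1, min_eq_right h3, max_eq_right h2]

lemma key_dist (F : Finset K) (c : K →₀ ℝ) (hc : (c.support : Set K) ⊆ ↑F)
    (l : K →₀ ℝ) (hl : (l.support : Set K) ⊆ (↑F : Set K)ᶜ) :
    ∑ y ∈ c.support, |c y| ≤
      ‖Finsupp.linearCombination ℝ δδ c - Finsupp.linearCombination ℝ δδ l‖ := by
  classical
  obtain ⟨u, hu1, huv⟩ := exists_testfn (F ∪ l.support)
    (fun y => if y ∈ F then Real.sign (c y) else 0) (fun y => by
      by_cases h : y ∈ F
      · simp only [h, if_true]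
        rcases lt_trichotomy (c y) 0 with h' | h' | h'
        · rw [Real.sign_of_neg h']; norm_num
        · rw [h', Real.sign_zero]; norm_num
        · rw [Real.sign_of_pos h']; norm_num
      · simp [h])
  have happ : (Finsupp.linearCombination ℝ δδ c - Finsupp.linearCombination ℝ δδ l) u
      = ∑ y ∈ c.support, |c y| := by
    have hcu : (Finsupp.linearCombination ℝ δδ c) u = ∑ y ∈ c.support, c y * u y := by
      rw [Finsupp.linearCombination_apply, Finsupp.sum]
      simp
    have hlu : (Finsupp.linearCombination ℝ δδ l) u = 0 := by
      rw [Finsupp.linearCombination_apply, Finsupp.sum]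
      simp only [ContinuousLinearMap.coe_sum', Finset.sum_apply, ContinuousLinearMap.coe_smul',
        Pi.smul_apply, δδ_apply, smul_eq_mul]
      refine Finset.sum_eq_zero fun y hy => ?_
      have hyF : y ∉ F := hl (Finset.mem_coe.mpr hy)
      have := huv y (Finset.mem_union_right _ hy)
      rw [this, if_neg hyF, mul_zero]
    rw [ContinuousLinearMap.sub_apply, hcu, hlu, sub_zero]
    refine Finset.sum_congr rfl fun y hy => ?_
    have hyF : y ∈ F := hc (Finset.mem_coe.mpr hy)
    rw [huv y (Finset.mem_union_left _ hyF), if_pos hyF]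
    rcases lt_trichotomy (c y) 0 with h' | h' | h'
    · rw [Real.sign_of_neg h', abs_of_neg h']; ring
    · rw [h']; simp
    · rw [Real.sign_of_pos h', abs_of_pos h']; ring
  calc ∑ y ∈ c.support, |c y|
      = (Finsupp.linearCombination ℝ δδ c - Finsupp.linearCombination ℝ δδ l) u := happ.symm
    _ ≤ |(Finsupp.linearCombination ℝ δδ c - Finsupp.linearCombination ℝ δδ l) u| := le_abs_self _
    _ ≤ ‖Finsupp.linearCombination ℝ δδ c - Finsupp.linearCombination ℝ δδ l‖ * ‖u‖ :=
        (Finsupp.linearCombination ℝ δδ c - Finsupp.linearCombination ℝ δδ l).le_opNorm u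
    _ ≤ _ * 1 := by
        refine mul_le_mul_of_nonneg_left hu1 (norm_nonneg (Finsupp.linearCombination ℝ δδ c - Finsupp.linearCombination ℝ δδ l))
    _ = _ := mul_one _


lemma fin_pou {ι : Type*} [Fintype ι] (V : ι → Set K) (hVo : ∀ i, IsOpen (V i))
    (hcov : ∀ z : K, ∃ i, z ∈ V i) :
    ∃ p : ι → C(K, ℝ), (∀ i z, 0 ≤ p i z) ∧ (∀ z, ∑ i, p i z = 1) ∧
      (∀ i z, p i z ≠ 0 → z ∈ V i) := by
  classical
  obtain ⟨w, hwcov, hwo, hwcl⟩ := exists_subset_iUnion_closure_subset isClosed_univ hVo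
    (fun x _ => Set.toFinite _) (fun x _ => Set.mem_iUnion.mpr (hcov x))
  have hq : ∀ i, ∃ q : C(K, ℝ), Set.EqOn q 0 (V i)ᶜ ∧ Set.EqOn q 1 (closure (w i)) ∧
      ∀ z, q z ∈ Set.Icc (0:ℝ) 1 := by
    intro i
    exact exists_continuous_zero_one_of_isClosed (hVo i).isClosed_compl isClosed_closure
      (Set.disjoint_left.mpr fun z hz hz' => hz (hwcl i hz'))
  choose q hq0 hq1 hqI using hq
  set σ : K → ℝ := fun z => ∑ i, q i z with hσ
  have hσ1 : ∀ z, 1 ≤ σ z := by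
    intro z
    obtain ⟨i, hi⟩ : ∃ i, z ∈ w i := Set.mem_iUnion.mp (hwcov (Set.mem_univ z))
    calc (1:ℝ) = q i z := by
          have := hq1 i (subset_closure hi); simpa using this.symm
      _ ≤ σ z := Finset.single_le_sum (fun j _ => (hqI j z).1) (Finset.mem_univ i)
  have hσc : Continuous σ := continuous_finset_sum _ fun i _ => (q i).continuous
  have hσ0 : ∀ z, σ z ≠ 0 := fun z => by linarith [hσ1 z]
  refine ⟨fun i => ⟨fun z => q i z / σ z, (q i).continuous.div hσc hσ0⟩, ?_, ?_, ?_⟩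
  · intro i z
    exact div_nonneg (hqI i z).1 (le_trans zero_le_one (hσ1 z))
  · intro z
    show ∑ i, q i z / σ z = 1
    rw [← Finset.sum_div]
    exact div_self (hσ0 z)
  · intro i z hz
    by_contra hzV
    apply hz
    show q i z / σ z = 0
    have : q i z = 0 := by simpa using hq0 i hzV
    rw [this, zero_div]

lemma discretize (f : StrongDual ℝ C(K, ℝ)) (hf : ‖f‖ ≤ 1) {S : Set K} (hS : Dense S)
    (T : Finset C(K, ℝ)) {ε : ℝ} (hε : 0 < ε) :
    ∃ ν : StrongDual ℝ C(K, ℝ), ν ∈ Submodule.span ℝ (δδ '' S) ∧ ‖ν‖ ≤ 1 ∧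
      ∀ u ∈ T, |ν u - f u| ≤ ε := by
  classical
  set V : K → Set K := fun y => {z | ∀ u ∈ T, |u z - u y| < ε/4} with hV
  have hVo : ∀ y, IsOpen (V y) := by
    intro y
    have hVeq : V y = ⋂ u ∈ T, {z | |u z - u y| < ε/4} := by ext z; simp [hV]
    rw [hVeq]
    refine isOpen_biInter_finset fun u _ => ?_
    exact isOpen_lt ((map_continuous u).sub continuous_const).abs continuous_const
  have hmemV : ∀ y, y ∈ V y := fun y => by
    intro u _
    simpa using (by positivity : (0:ℝ) < ε/4)
  obtain ⟨t, ht⟩ := IsCompact.elim_finite_subcover isCompact_univ V hVo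
      (fun z _ => Set.mem_iUnion.2 ⟨z, hmemV z⟩)
  obtain ⟨p, hp0, hp1, hpV⟩ := fin_pou (ι := {y // y ∈ t}) (fun i => V i.1) (fun i => hVo _)
      (fun z => by
        have := ht (Set.mem_univ z)
        simp only [Set.mem_iUnion] at this
        obtain ⟨y, hyt, hyV⟩ := this
        exact ⟨⟨y, hyt⟩, hyV⟩)
  have hpt : ∀ i : {y // y ∈ t}, ∃ yy : K,
      ((∃ z, p i z ≠ 0) → (yy ∈ S ∧ p i yy ≠ 0)) := by
    intro i
    by_cases hi : ∃ z, p i z ≠ 0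
    · obtain ⟨z0, hz0⟩ := hi
      have hopen : IsOpen {z | 0 < p i z} := isOpen_lt continuous_const (map_continuous (p i))
      have hne : {z | 0 < p i z}.Nonempty := ⟨z0, lt_of_le_of_ne (hp0 i z0) (Ne.symm hz0)⟩
      obtain ⟨yy, hyS, hy⟩ := hS.exists_mem_open hopen hne
      exact ⟨yy, fun _ => ⟨hyS, ne_of_gt hy⟩⟩
    · exact ⟨i.1, fun h => absurd h hi⟩
  choose Y hY using hpt
  refine ⟨∑ i, f (p i) • δδ (Y i), ?_, ?_, ?_⟩
  · refine Submodule.sum_mem _ fun i _ => ?_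
    by_cases hi : ∃ z, p i z ≠ 0
    · exact Submodule.smul_mem _ _ (Submodule.subset_span ⟨Y i, (hY i hi).1, rfl⟩)
    · have hp : p i = 0 := by
        ext z
        by_contra hz
        exact hi ⟨z, hz⟩
      rw [hp, map_zero, zero_smul]
      exact Submodule.zero_mem _
  · refine ContinuousLinearMap.opNorm_le_bound _ zero_le_one fun u => ?_
    have happ : (∑ i, f (p i) • δδ (Y i)) u = f (∑ i, u (Y i) • p i) := by
      rw [map_sum]
      simp only [ContinuousLinearMap.coe_sum', Finset.sum_apply, ContinuousLinearMap.coe_smul',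
        Pi.smul_apply, δδ_apply, smul_eq_mul, map_smul]
      exact Finset.sum_congr rfl fun i _ => mul_comm _ _
    rw [happ, one_mul]
    calc ‖f (∑ i, u (Y i) • p i)‖ ≤ ‖f‖ * ‖∑ i, u (Y i) • p i‖ := f.le_opNorm _
      _ ≤ 1 * ‖∑ i, u (Y i) • p i‖ := by
          exact mul_le_mul_of_nonneg_right hf (norm_nonneg _)
      _ = ‖∑ i, u (Y i) • p i‖ := one_mul _
      _ ≤ ‖u‖ := by
          rw [ContinuousMap.norm_le _ (norm_nonneg u)]
          intro z
          simp only [ContinuousMap.coe_sum, Finset.sum_apply, ContinuousMap.coe_smul,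
            Pi.smul_apply, smul_eq_mul, Real.norm_eq_abs]
          calc |∑ i, u (Y i) * p i z| ≤ ∑ i, |u (Y i) * p i z| := Finset.abs_sum_le_sum_abs _ _
            _ ≤ ∑ i, ‖u‖ * p i z := by
                refine Finset.sum_le_sum fun i _ => ?_
                rw [abs_mul, abs_of_nonneg (hp0 i z)]
                exact mul_le_mul_of_nonneg_right (u.norm_coe_le_norm (Y i)) (hp0 i z)
            _ = ‖u‖ := by rw [← Finset.mul_sum, hp1 z, mul_one]
  · intro u huT
    have key : ∀ i z, |u (Y i) - u z| * p i z ≤ (ε/2) * p i z := by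
      intro i z
      by_cases hz : p i z = 0
      · rw [hz, mul_zero, mul_zero]
      · have hzV : z ∈ V i.1 := hpV i z hz
        have hYi : p i (Y i) ≠ 0 := (hY i ⟨z, hz⟩).2
        have hYV : Y i ∈ V i.1 := hpV i (Y i) hYi
        have h1 : |u (Y i) - u i.1| < ε/4 := hYV u huT
        have h2 : |u z - u i.1| < ε/4 := hzV u huT
        have : |u (Y i) - u z| ≤ ε/2 := by
          calc |u (Y i) - u z| = |(u (Y i) - u i.1) - (u z - u i.1)| := by ring_nf
            _ ≤ |u (Y i) - u i.1| + |u z - u i.1| := abs_sub _ _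
            _ ≤ ε/2 := by linarith
        exact mul_le_mul_of_nonneg_right this (hp0 i z)
    have hfu : f u = f (∑ i, p i * u) := by
      congr 1
      ext z
      simp only [ContinuousMap.coe_sum, Finset.sum_apply, ContinuousMap.coe_mul, Pi.mul_apply]
      rw [← Finset.sum_mul, hp1 z, one_mul]
    have happ : (∑ i, f (p i) • δδ (Y i)) u - f u = f (∑ i, (u (Y i) • p i - p i * u)) := by
      rw [hfu]
      rw [Finset.sum_sub_distrib, map_sub, map_sum, map_sum]
      congr 1
      simp only [ContinuousLinearMap.coe_sum', Finset.sum_apply, ContinuousLinearMap.coe_smul',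
        Pi.smul_apply, δδ_apply, smul_eq_mul, map_smul]
      exact Finset.sum_congr rfl fun i _ => mul_comm _ _
    rw [happ]
    calc |f (∑ i, (u (Y i) • p i - p i * u))| ≤ ‖f‖ * ‖∑ i, (u (Y i) • p i - p i * u)‖ :=
          f.le_opNorm _
      _ ≤ 1 * ‖∑ i, (u (Y i) • p i - p i * u)‖ :=
          mul_le_mul_of_nonneg_right hf (norm_nonneg _)
      _ = ‖∑ i, (u (Y i) • p i - p i * u)‖ := one_mul _
      _ ≤ ε/2 := by
          rw [ContinuousMap.norm_le _ (by positivity)]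
          intro z
          simp only [ContinuousMap.coe_sum, Finset.sum_apply, ContinuousMap.coe_sub,
            ContinuousMap.coe_smul, ContinuousMap.coe_mul, Pi.sub_apply, Pi.smul_apply,
            Pi.mul_apply, smul_eq_mul, Real.norm_eq_abs]
          calc |∑ i, (u (Y i) * p i z - p i z * u z)|
              ≤ ∑ i, |u (Y i) * p i z - p i z * u z| := Finset.abs_sum_le_sum_abs _ _
            _ ≤ ∑ i, (ε/2) * p i z := by
                refine Finset.sum_le_sum fun i _ => ?_
                have : u (Y i) * p i z - p i z * u z = (u (Y i) - u z) * p i z := by ring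
                rw [this, abs_mul, abs_of_nonneg (hp0 i z)]
                exact key i z
            _ = ε/2 := by rw [← Finset.mul_sum, hp1 z, mul_one]
      _ ≤ ε := by linarith


section Isolated

variable {x : K}

open Classical in
def chi (x : K) (hx : IsOpen ({x} : Set K)) : C(K, ℝ) := by
  refine ⟨fun y => if y = x then 1 else 0, continuous_iff_continuousAt.mpr fun y => ?_⟩
  by_cases hy : y = x
  · subst hy
    refine Filter.EventuallyEq.continuousAt (y := 1) ?_
    filter_upwards [hx.mem_nhds rfl] with z hz
    rw [Set.mem_singleton_iff] at hz
    simp [hz]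
  · refine Filter.EventuallyEq.continuousAt (y := 0) ?_
    filter_upwards [isClosed_singleton.isOpen_compl.mem_nhds hy] with z hz
    rw [Set.mem_compl_iff, Set.mem_singleton_iff] at hz
    simp [hz]

open Classical in
@[simp] lemma chi_apply (hx : IsOpen ({x} : Set K)) (y : K) :
    chi x hx y = if y = x then 1 else 0 := rfl

lemma chi_x (hx : IsOpen ({x} : Set K)) : chi x hx x = 1 := by
  classical
  rw [chi_apply, if_pos rfl]

lemma chi_abs_le (hx : IsOpen ({x} : Set K)) (y : K) : |chi x hx y| ≤ 1 := by
  classical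
  rw [chi_apply]; split <;> norm_num

lemma norm_chi_le (hx : IsOpen ({x} : Set K)) : ‖chi x hx‖ ≤ 1 := by
  rw [ContinuousMap.norm_le _ zero_le_one]
  intro y
  rw [Real.norm_eq_abs]
  exact chi_abs_le hx y

lemma apply_chi_le (hx : IsOpen ({x} : Set K)) (g : StrongDual ℝ C(K, ℝ)) (hg : ‖g‖ ≤ 1) :
    g (chi x hx) ≤ 1 := by
  calc g (chi x hx) ≤ |g (chi x hx)| := le_abs_self _
    _ ≤ ‖g‖ * ‖chi x hx‖ := g.le_opNorm _
    _ ≤ 1 * 1 := mul_le_mul hg (norm_chi_le hx) (norm_nonneg _) zero_le_one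
    _ = 1 := one_mul _

lemma vanish_bound (hx : IsOpen ({x} : Set K)) (g : StrongDual ℝ C(K, ℝ)) (hg : ‖g‖ ≤ 1)
    (v : C(K, ℝ)) (hvx : v x = 0)
    (M : ℝ) (hM : ∀ y, |v y| ≤ M) : |g v| ≤ M * (1 - g (chi x hx)) := by
  classical
  have hM0 : 0 ≤ M := le_trans (abs_nonneg _) (hM x)
  have hpm : ∀ s : ℝ, |s| ≤ 1 → ‖v + (s * M) • chi x hx‖ ≤ M := by
    intro s hs
    rw [ContinuousMap.norm_le _ hM0]
    intro y
    simp only [ContinuousMap.coe_add, ContinuousMap.coe_smul, Pi.add_apply, Pi.smul_apply,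
      smul_eq_mul, Real.norm_eq_abs, chi_apply]
    by_cases hy : y = x
    · rw [hy, hvx, if_pos rfl, mul_one, zero_add, abs_mul]
      calc |s| * |M| ≤ 1 * |M| := mul_le_mul_of_nonneg_right hs (abs_nonneg _)
        _ = M := by rw [one_mul, abs_of_nonneg hM0]
    · rw [if_neg hy, mul_zero, add_zero]
      exact hM y
  have hval : ∀ s : ℝ, |s| ≤ 1 → |g v + s * M * g (chi x hx)| ≤ M := by
    intro s hs
    have h2 : |g (v + (s * M) • chi x hx)| ≤ M := by
      calc |g _| ≤ ‖g‖ * ‖v + (s * M) • chi x hx‖ := g.le_opNorm _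
        _ ≤ 1 * M := mul_le_mul hg (hpm s hs) (norm_nonneg _) zero_le_one
        _ = M := one_mul _
    rwa [map_add, map_smul, smul_eq_mul] at h2
  have hplus := abs_le.mp (hval 1 (by norm_num))
  have hminus := abs_le.mp (hval (-1) (by norm_num))
  rw [abs_le]
  constructor <;> nlinarith [hplus.1, hplus.2, hminus.1, hminus.2]

lemma norm_sub_delta_le (hx : IsOpen ({x} : Set K)) (g : StrongDual ℝ C(K, ℝ)) (hg : ‖g‖ ≤ 1) :
    ‖g - δδ x‖ ≤ 2 * (1 - g (chi x hx)) := by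
  classical
  have hgχ : g (chi x hx) ≤ 1 := apply_chi_le hx g hg
  refine ContinuousLinearMap.opNorm_le_bound _ (by linarith) fun u => ?_
  set v : C(K, ℝ) := u - u x • chi x hx with hv
  have hvx : v x = 0 := by
    simp only [hv, ContinuousMap.coe_sub, ContinuousMap.coe_smul, Pi.sub_apply, Pi.smul_apply,
      smul_eq_mul, chi_apply, eq_self_iff_true, if_true, mul_one, sub_self]
  have hvb : ∀ y, |v y| ≤ ‖u‖ := by
    intro y
    simp only [hv, ContinuousMap.coe_sub, ContinuousMap.coe_smul, Pi.sub_apply, Pi.smul_apply,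
      smul_eq_mul, chi_apply]
    by_cases hy : y = x
    · rw [hy, if_pos rfl, mul_one, sub_self, abs_zero]; exact norm_nonneg u
    · rw [if_neg hy, mul_zero, sub_zero]
      exact u.norm_coe_le_norm y
  have hbd := vanish_bound hx g hg v hvx ‖u‖ hvb
  have hux : |u x| ≤ ‖u‖ := u.norm_coe_le_norm x
  have hexp : (g - δδ x) u = g v + u x * (g (chi x hx) - 1) := by
    simp only [ContinuousLinearMap.sub_apply, δδ_apply, hv, map_sub, map_smul, smul_eq_mul]
    ring
  rw [hexp, Real.norm_eq_abs]
  calc |g v + u x * (g (chi x hx) - 1)| ≤ |g v| + |u x * (g (chi x hx) - 1)| := abs_add_le _ _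
    _ ≤ ‖u‖ * (1 - g (chi x hx)) + |u x| * (1 - g (chi x hx)) := by
        rw [abs_mul]
        refine add_le_add hbd (mul_le_mul_of_nonneg_left ?_ (abs_nonneg _))
        rw [abs_sub_comm, abs_of_nonneg (by linarith)]
    _ ≤ ‖u‖ * (1 - g (chi x hx)) + ‖u‖ * (1 - g (chi x hx)) :=
        add_le_add_right (mul_le_mul_of_nonneg_right hux (by linarith)) _
    _ = 2 * (1 - g (chi x hx)) * ‖u‖ := by ring

lemma eq_delta_of (hx : IsOpen ({x} : Set K)) (g : StrongDual ℝ C(K, ℝ)) (hg : ‖g‖ ≤ 1)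
    (hgχ : g (chi x hx) = 1) : g = δδ x := by
  have hb := norm_sub_delta_le hx g hg
  rw [hgχ, sub_self, mul_zero] at hb
  have h0 : dist g (δδ x) = 0 := by
    rw [dist_eq_norm g (δδ x)]
    exact le_antisymm hb (norm_nonneg (g - δδ x))
  exact eq_of_dist_eq_zero h0

lemma delta_mem_ball : δδ x ∈ Metric.closedBall (0 : StrongDual ℝ C(K, ℝ)) 1 := by
  rw [Metric.mem_closedBall, dist_zero_right (δδ x)]
  exact norm_δδ_le x

lemma delta_extreme (hx : IsOpen ({x} : Set K)) :
    δδ x ∈ Set.extremePoints ℝ (Metric.closedBall (0 : StrongDual ℝ C(K, ℝ)) 1) := by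
  rw [mem_extremePoints]
  refine ⟨delta_mem_ball, fun g₁ hg₁ g₂ hg₂ hseg => ?_⟩
  rw [Metric.mem_closedBall, dist_zero_right g₁] at hg₁
  rw [Metric.mem_closedBall, dist_zero_right g₂] at hg₂
  obtain ⟨a, b, ha, hb, hab, habx⟩ := hseg
  have hχ1 : g₁ (chi x hx) ≤ 1 := apply_chi_le hx g₁ hg₁
  have hχ2 : g₂ (chi x hx) ≤ 1 := apply_chi_le hx g₂ hg₂
  have happ : a * g₁ (chi x hx) + b * g₂ (chi x hx) = 1 := by
    have hh : (a • g₁ + b • g₂) (chi x hx) = δδ x (chi x hx) := by rw [habx]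
    rw [ContinuousLinearMap.add_apply, ContinuousLinearMap.smul_apply,
      ContinuousLinearMap.smul_apply, smul_eq_mul, smul_eq_mul, δδ_apply, chi_x hx] at hh
    exact hh
  have h1 : g₁ (chi x hx) = 1 := by nlinarith
  have h2 : g₂ (chi x hx) = 1 := by nlinarith
  exact ⟨eq_delta_of hx g₁ hg₁ h1, eq_delta_of hx g₂ hg₂ h2⟩

lemma delta_isPoC (hx : IsOpen ({x} : Set K)) : IsPoC (δδ x) := by
  unfold IsPoC
  have step1 : Tendsto (fun g : WeakDual ℝ C(K, ℝ) => (WeakDual.toStrongDual g : StrongDual ℝ C(K, ℝ)))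
      (𝓝[{g : WeakDual ℝ C(K, ℝ) | ‖WeakDual.toStrongDual g‖ ≤ 1}]
        (StrongDual.toWeakDual (δδ x))) (𝓝 (δδ x)) := by
    refine (Metric.tendsto_nhds (α := StrongDual ℝ C(K, ℝ))).mpr ?_
    intro ε hε
    have hWopen : IsOpen {g : WeakDual ℝ C(K, ℝ) | 1 - ε/4 < g (chi x hx)} :=
      isOpen_lt continuous_const (WeakDual.eval_continuous (chi x hx))
    have hWmem : (StrongDual.toWeakDual (δδ x)) ∈
        {g : WeakDual ℝ C(K, ℝ) | 1 - ε/4 < g (chi x hx)} := by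
      show 1 - ε/4 < δδ x (chi x hx)
      rw [δδ_apply, chi_x hx]
      linarith
    filter_upwards [nhdsWithin_le_nhds (hWopen.mem_nhds hWmem), self_mem_nhdsWithin] with g hgW hgB
    have hgB' : ‖(WeakDual.toStrongDual g : StrongDual ℝ C(K, ℝ))‖ ≤ 1 := hgB
    have hgW' : 1 - ε/4 < (WeakDual.toStrongDual g : StrongDual ℝ C(K, ℝ)) (chi x hx) := hgW
    rw [dist_eq_norm (WeakDual.toStrongDual g : StrongDual ℝ C(K, ℝ)) (δδ x)]
    calc ‖(WeakDual.toStrongDual g : StrongDual ℝ C(K, ℝ)) - δδ x‖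
        ≤ 2 * (1 - (WeakDual.toStrongDual g : StrongDual ℝ C(K, ℝ)) (chi x hx)) :=
          norm_sub_delta_le hx _ hgB'
      _ < ε := by linarith
  exact ((toWeakSpaceCLM ℝ (StrongDual ℝ C(K, ℝ))).continuous.tendsto (δδ x)).comp step1

end Isolated


lemma dense_compl_finset (hiso : ¬ ∃ x : K, IsOpen ({x} : Set K)) (F : Finset K) :
    Dense ((↑F : Set K)ᶜ) := by
  classical
  induction F using Finset.induction_on with
  | empty => simpa using dense_univ
  | @insert x F hxF ih =>
      have hdx : Dense ({x}ᶜ : Set K) :=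
        dense_compl_singleton_iff_not_open.mpr fun ho => hiso ⟨x, ho⟩
      have hins : (↑(insert x F) : Set K)ᶜ = {x}ᶜ ∩ (↑F : Set K)ᶜ := by
        rw [Finset.coe_insert, Set.insert_eq, Set.compl_union]
      rw [hins]
      exact hdx.inter_of_isOpen_left ih isClosed_singleton.isOpen_compl

lemma norm_linearCombination_le (c : K →₀ ℝ) :
    ‖Finsupp.linearCombination ℝ δδ c‖ ≤ ∑ y ∈ c.support, |c y| := by
  rw [Finsupp.linearCombination_apply, Finsupp.sum]
  refine (norm_sum_le c.support (fun y => c y • δδ y)).trans (Finset.sum_le_sum fun y _ => ?_)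
  haveI : NormSMulClass ℝ (StrongDual ℝ C(K, ℝ)) := @NormedSpace.toNormSMulClass ℝ (StrongDual ℝ C(K, ℝ)) _ _ _
  rw [norm_smul, Real.norm_eq_abs]
  calc |c y| * ‖δδ y‖ ≤ |c y| * 1 := mul_le_mul_of_nonneg_left (norm_δδ_le y) (abs_nonneg _)
    _ = |c y| := mul_one _

lemma dichotomy (f : StrongDual ℝ C(K, ℝ)) (hf : ‖f‖ = 1) :
    ∃ (F : Finset K) (c₀ : ℝ), 0 < c₀ ∧
      ∀ ν ∈ (Submodule.span ℝ (δδ '' ((↑F : Set K)ᶜ)) : Submodule ℝ (StrongDual ℝ C(K, ℝ))),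
        c₀ ≤ ‖f - ν‖ := by
  classical
  by_cases hZ : f ∈ closure ((Submodule.span ℝ (δδ '' (Set.univ : Set K)) :
      Submodule ℝ (StrongDual ℝ C(K, ℝ))) : Set (StrongDual ℝ C(K, ℝ)))
  · replace hZ := (Metric.mem_closure_iff (α := StrongDual ℝ C(K, ℝ))).mp hZ
    obtain ⟨g, hgmem, hgdist⟩ := hZ (1/4) (by norm_num)
    rw [SetLike.mem_coe, Finsupp.mem_span_image_iff_linearCombination] at hgmem
    obtain ⟨c, -, rfl⟩ := hgmem
    refine ⟨c.support, 1/4, by norm_num, fun ν hν => ?_⟩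
    rw [Finsupp.mem_span_image_iff_linearCombination] at hν
    obtain ⟨l, hlsupp, rfl⟩ := hν
    rw [Finsupp.mem_supported] at hlsupp
    have hkey := key_dist c.support c subset_rfl l hlsupp
    have hdist : ‖f - Finsupp.linearCombination ℝ δδ c‖ < 1/4 := by
      rw [← dist_eq_norm f (Finsupp.linearCombination ℝ δδ c)]; exact hgdist
    have hgn : (3:ℝ)/4 ≤ ∑ y ∈ c.support, |c y| := by
      have h1 : ‖f‖ ≤ ‖f - Finsupp.linearCombination ℝ δδ c‖ +
          ‖Finsupp.linearCombination ℝ δδ c‖ := by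
        calc ‖f‖ = ‖(f - Finsupp.linearCombination ℝ δδ c) +
            Finsupp.linearCombination ℝ δδ c‖ := by rw [sub_add_cancel]
          _ ≤ _ := norm_add_le (f - Finsupp.linearCombination ℝ δδ c) (Finsupp.linearCombination ℝ δδ c)
      have h2 := norm_linearCombination_le c
      rw [hf] at h1
      linarith
    have htri : ‖Finsupp.linearCombination ℝ δδ c - Finsupp.linearCombination ℝ δδ l‖ ≤
        ‖Finsupp.linearCombination ℝ δδ c - f‖ + ‖f - Finsupp.linearCombination ℝ δδ l‖ := by
      calc ‖Finsupp.linearCombination ℝ δδ c - Finsupp.linearCombination ℝ δδ l‖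
          = ‖(Finsupp.linearCombination ℝ δδ c - f) + (f - Finsupp.linearCombination ℝ δδ l)‖ := by
            rw [sub_add_sub_cancel]
        _ ≤ _ := norm_add_le (Finsupp.linearCombination ℝ δδ c - f) (f - Finsupp.linearCombination ℝ δδ l)
    rw [norm_sub_rev f (Finsupp.linearCombination ℝ δδ c)] at hdist
    linarith
  · replace hZ := mt (Metric.mem_closure_iff (α := StrongDual ℝ C(K, ℝ))).mpr hZ
    push_neg at hZ
    obtain ⟨ε, hε, hb⟩ := hZ
    refine ⟨∅, ε, hε, fun ν hν => ?_⟩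
    have hν' : ν ∈ (Submodule.span ℝ (δδ '' (Set.univ : Set K)) :
        Submodule ℝ (StrongDual ℝ C(K, ℝ))) := by
      have he : ((↑(∅ : Finset K) : Set K))ᶜ = (Set.univ : Set K) := by
        rw [Finset.coe_empty, Set.compl_empty]
      rwa [he] at hν
    have := hb ν (SetLike.mem_coe.mpr hν')
    rwa [dist_eq_norm f ν] at this


end Stmt12Aux

/-- Let `K` be a compact Hausdorff space and `X = C(K, ℝ)`.  If no
extreme point of `B_{X*}` is a point of continuity of `I : (B_{X*}, w*) → (B_{X*}, w)`,
then no point of the unit sphere `S_{X*}` is a point of continuity of `I`. -/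
theorem stmt_12 {K : Type*} [TopologicalSpace K] [CompactSpace K] [T2Space K]
    (h : ∀ f ∈ Set.extremePoints ℝ (Metric.closedBall (0 : StrongDual ℝ C(K, ℝ)) 1), ¬ IsPoC f) :
    ∀ f : StrongDual ℝ C(K, ℝ), ‖f‖ = 1 → ¬ IsPoC f := by
  open Stmt12Aux in
  classical
  intro f hf hPoC
  by_cases hiso : ∃ x : K, IsOpen ({x} : Set K)
  · obtain ⟨x, hx⟩ := hiso
    exact h (δδ x) (delta_extreme hx) (delta_isPoC hx)
  · cases isEmpty_or_nonempty K with
    | inl hK =>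
        haveI : Subsingleton C(K, ℝ) := ⟨fun a b => ContinuousMap.ext fun z => hK.elim z⟩
        have hf0 : f = 0 := by
          ext u
          rw [Subsingleton.elim u 0, map_zero]
          rfl
        rw [hf0, norm_zero (E := StrongDual ℝ C(K, ℝ))] at hf
        norm_num at hf
    | inr hK =>
        obtain ⟨F, c₀, hc₀, hdist⟩ := dichotomy f hf
        set S : Set K := (↑F : Set K)ᶜ with hSdef
        have hS : Dense S := dense_compl_finset hiso F
        -- Hahn-Banach
        have hconv : Convex ℝ (closure ((Submodule.span ℝ (δδ '' S) :
            Submodule ℝ (StrongDual ℝ C(K, ℝ))) : Set (StrongDual ℝ C(K, ℝ)))) :=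
          (Submodule.span ℝ (δδ '' S)).convex.closure
        have hfnot : f ∉ closure ((Submodule.span ℝ (δδ '' S) :
            Submodule ℝ (StrongDual ℝ C(K, ℝ))) : Set (StrongDual ℝ C(K, ℝ))) := by
          intro hmem
          replace hmem := (Metric.mem_closure_iff (α := StrongDual ℝ C(K, ℝ))).mp hmem
          obtain ⟨b, hbmem, hbd⟩ := hmem c₀ hc₀
          rw [dist_eq_norm f b] at hbd
          exact absurd (hdist b (SetLike.mem_coe.mpr hbmem)) (not_le.mpr hbd)
        obtain ⟨Φ, u0, hΦf, hΦgt⟩ :=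
          geometric_hahn_banach_point_closed hconv isClosed_closure hfnot
        have hu0 : u0 < 0 := by
          have h0 := hΦgt 0 (subset_closure (Submodule.zero_mem _))
          rwa [map_zero] at h0
        have hΦ0 : ∀ ν ∈ (Submodule.span ℝ (δδ '' S) : Submodule ℝ (StrongDual ℝ C(K, ℝ))),
            Φ ν = 0 := by
          intro ν hν
          by_contra hne
          have hr := hΦgt (((u0 - 1)/(Φ ν)) • ν)
            (subset_closure (SetLike.mem_coe.mpr (Submodule.smul_mem _ _ hν)))
          rw [map_smul, smul_eq_mul, div_mul_cancel₀ _ hne] at hr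
          linarith
        -- the approximating net
        have hch : ∀ d : Finset C(K, ℝ) × ℕ, ∃ ν : StrongDual ℝ C(K, ℝ),
            ν ∈ Submodule.span ℝ (δδ '' S) ∧ ‖ν‖ ≤ 1 ∧
            ∀ u ∈ d.1, |ν u - f u| ≤ 1/(d.2+1) :=
          fun d => discretize f (le_of_eq hf) hS d.1 (by positivity)
        choose ν hν1 hν2 hν3 using hch
        set A : Set (WeakDual ℝ C(K, ℝ)) := {g | ‖WeakDual.toStrongDual g‖ ≤ 1 ∧
          WeakDual.toStrongDual g ∈ Submodule.span ℝ (δδ '' S)} with hAdef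
        have hνA : ∀ d, (StrongDual.toWeakDual (ν d)) ∈ A := fun d => ⟨hν2 d, hν1 d⟩
        have htend : Tendsto (fun d : Finset C(K, ℝ) × ℕ => StrongDual.toWeakDual (ν d))
            atTop (𝓝 (StrongDual.toWeakDual f)) := by
          rw [tendsto_iff_forall_eval_tendsto_topDualPairing]
          intro u
          have heq : ∀ d : Finset C(K, ℝ) × ℕ,
              topDualPairing ℝ C(K, ℝ) (StrongDual.toWeakDual (ν d)) u = ν d u := fun _ => rfl
          rw [Metric.tendsto_nhds]
          intro ε hε
          obtain ⟨N, hN⟩ := exists_nat_one_div_lt hε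
          rw [eventually_atTop]
          refine ⟨({u}, N), fun d hd => ?_⟩
          have hu : u ∈ d.1 := hd.1 (Finset.mem_singleton_self u)
          have hle : (1:ℝ)/(d.2+1) ≤ 1/(N+1) := by
            apply one_div_le_one_div_of_le (by positivity)
            have : (N:ℝ) ≤ d.2 := Nat.cast_le.mpr hd.2
            linarith
          rw [Real.dist_eq]
          calc |topDualPairing ℝ C(K, ℝ) (StrongDual.toWeakDual (ν d)) u -
              topDualPairing ℝ C(K, ℝ) (StrongDual.toWeakDual f) u| = |ν d u - f u| := rfl
            _ ≤ 1/(d.2+1) := hν3 d u hu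
            _ ≤ 1/(N+1) := hle
            _ < ε := hN
        have hclos : StrongDual.toWeakDual f ∈ closure A :=
          mem_closure_of_tendsto htend (Eventually.of_forall hνA)
        haveI hne : (𝓝[A] (StrongDual.toWeakDual f)).NeBot :=
          mem_closure_iff_nhdsWithin_neBot.mp hclos
        have hsub : A ⊆ {g : WeakDual ℝ C(K, ℝ) | ‖WeakDual.toStrongDual g‖ ≤ 1} :=
          fun g hg => hg.1
        have hPoC' := hPoC.mono hsub
        have hΦcont : Continuous fun w : WeakSpace ℝ (StrongDual ℝ C(K, ℝ)) => Φ w :=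
          WeakBilin.eval_continuous _ Φ
        have T1 : Tendsto (fun g : WeakDual ℝ C(K, ℝ) => Φ (WeakDual.toStrongDual g))
            (𝓝[A] (StrongDual.toWeakDual f)) (𝓝 (Φ f)) :=
          (hΦcont.tendsto _).comp hPoC'
        have T2 : Tendsto (fun g : WeakDual ℝ C(K, ℝ) => Φ (WeakDual.toStrongDual g))
            (𝓝[A] (StrongDual.toWeakDual f)) (𝓝 0) := by
          have hconst : Tendsto (fun _ : WeakDual ℝ C(K, ℝ) => (0:ℝ))
              (𝓝[A] (StrongDual.toWeakDual f)) (𝓝 0) := tendsto_const_nhds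
          refine Tendsto.congr' ?_ hconst
          exact Filter.eventually_of_mem self_mem_nhdsWithin fun g hg => (hΦ0 _ hg.2).symm
        have : Φ f = 0 := tendsto_nhds_unique T1 T2
        linarith
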